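/- Let the MPS be in canonical form. Then for every interior bond i ∈ {1,…,N−1}, the squared ℓ²-norm of the wavefunction equals the sum of the squared diagonal entries of Λ^{[i]}: Σ_σ |Ψ(σ)|² = Σ_{α} (Λ^{[i]}_{αα})². In particular, the wavefunction is normalized (Σ_σ |Ψ(σ)|² = 1) if and only if Σ_α (Λ^{[i]}_{αα})² = 1 at any (equivalently, every) interior bond i. -/

import Mathlib

open Matrix

/-- Partial product `Λ⁰ Γ¹ Λ¹ ⋯ Γⁱ Λⁱ` of an MPS; the tensor `Γ i` is the site tensor
of site `i + 1` (sites are numbered `1, …, N`, bonds `0, 1, …, N`). -/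
noncomputable def mpsW {d : ℕ} (χ : ℕ → ℕ)
    (Γ : (i : ℕ) → Fin d → Matrix (Fin (χ i)) (Fin (χ (i + 1))) ℂ)
    (Λ : (i : ℕ) → Matrix (Fin (χ i)) (Fin (χ i)) ℂ) :
    (i : ℕ) → (ℕ → Fin d) → Matrix (Fin (χ 0)) (Fin (χ i)) ℂ
  | 0, _ => Λ 0
  | (i + 1), σ => mpsW χ Γ Λ i σ * Γ i (σ i) * Λ (i + 1)

/-- The MPS wavefunction `Ψ(σ)`: the unique entry (written as the sum of all entries) of the
`1 × 1` matrix `Λ⁰ Γ¹ Λ¹ Γ² Λ² ⋯ Γᴺ Λᴺ` (the bond dimensions satisfy `χ 0 = χ N = 1`). -/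
noncomputable def mpsPsi {d : ℕ} [NeZero d] (N : ℕ) (χ : ℕ → ℕ)
    (Γ : (i : ℕ) → Fin d → Matrix (Fin (χ i)) (Fin (χ (i + 1))) ℂ)
    (Λ : (i : ℕ) → Matrix (Fin (χ i)) (Fin (χ i)) ℂ)
    (σ : Fin N → Fin d) : ℂ :=
  ∑ a, ∑ b, mpsW χ Γ Λ N (fun k => if h : k < N then σ ⟨k, h⟩ else 0) a b

/-- Canonical form: for every site `i + 1` (`i < N`), with `A = Λ i * Γ i s` and
`B = Γ i s * Λ (i+1)`, one has `∑ s, Aᴴ A = 1` and `∑ s, B Bᴴ = 1`. -/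
noncomputable def IsCanonicalMPS {d : ℕ} (N : ℕ) (χ : ℕ → ℕ)
    (Γ : (i : ℕ) → Fin d → Matrix (Fin (χ i)) (Fin (χ (i + 1))) ℂ)
    (Λ : (i : ℕ) → Matrix (Fin (χ i)) (Fin (χ i)) ℂ) : Prop :=
  ∀ i < N,
    (∑ s : Fin d, (Λ i * Γ i s)ᴴ * (Λ i * Γ i s) = 1) ∧
    (∑ s : Fin d, (Γ i s * Λ (i + 1)) * (Γ i s * Λ (i + 1))ᴴ = 1)

/-- Tail product `Γ^{i+1} Λ^{i+1} ⋯ Γ^{i+n} Λ^{i+n}` from bond `i` to bond `i + n`. -/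
noncomputable def mpsT {d : ℕ} (χ : ℕ → ℕ)
    (Γ : (i : ℕ) → Fin d → Matrix (Fin (χ i)) (Fin (χ (i + 1))) ℂ)
    (Λ : (i : ℕ) → Matrix (Fin (χ i)) (Fin (χ i)) ℂ) (i : ℕ) :
    (n : ℕ) → (ℕ → Fin d) → Matrix (Fin (χ i)) (Fin (χ (i + n))) ℂ
  | 0, _ => (1 : Matrix (Fin (χ i)) (Fin (χ i)) ℂ)
  | (n + 1), σ => mpsT χ Γ Λ i n σ * Γ (i + n) (σ (i + n)) * Λ (i + n + 1)

section Aux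

variable {d : ℕ} (χ : ℕ → ℕ)
    (Γ : (i : ℕ) → Fin d → Matrix (Fin (χ i)) (Fin (χ (i + 1))) ℂ)
    (Λ : (i : ℕ) → Matrix (Fin (χ i)) (Fin (χ i)) ℂ)

theorem mpsW_congr : ∀ (i : ℕ) (σ σ' : ℕ → Fin d), (∀ k, k < i → σ k = σ' k) →
    mpsW χ Γ Λ i σ = mpsW χ Γ Λ i σ'
  | 0, _, _, _ => rfl
  | (i + 1), σ, σ', h => by
    simp only [mpsW, mpsW_congr i σ σ' (fun k hk => h k (Nat.lt_succ_of_lt hk)),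
      h i (Nat.lt_succ_self i)]

theorem mpsT_congr (i : ℕ) : ∀ (n : ℕ) (σ σ' : ℕ → Fin d),
    (∀ k, i ≤ k → k < i + n → σ k = σ' k) →
    mpsT χ Γ Λ i n σ = mpsT χ Γ Λ i n σ'
  | 0, _, _, _ => rfl
  | (n + 1), σ, σ', h => by
    simp only [mpsT, mpsT_congr i n σ σ' (fun k h1 h2 => h k h1 (by omega)),
      h (i + n) (by omega) (by omega)]

theorem mpsW_split (i : ℕ) : ∀ (n : ℕ) (σ : ℕ → Fin d),
    mpsW χ Γ Λ (i + n) σ = mpsW χ Γ Λ i σ * mpsT χ Γ Λ i n σ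
  | 0, σ => by simp [mpsT]
  | (n + 1), σ => by
    show mpsW χ Γ Λ ((i + n) + 1) σ = mpsW χ Γ Λ i σ * mpsT χ Γ Λ i (n + 1) σ
    simp only [mpsW, mpsT, mpsW_split i n σ, Matrix.mul_assoc]

theorem sum_snoc {M : Type*} [AddCommMonoid M] (n : ℕ) (f : (Fin (n + 1) → Fin d) → M) :
    ∑ τ : Fin (n + 1) → Fin d, f τ =
      ∑ τ : Fin n → Fin d, ∑ s : Fin d, f (Fin.snoc τ s) := by
  rw [← Equiv.sum_comp (Fin.snocEquiv (fun _ => Fin d)) f, Fintype.sum_prod_type,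
    Finset.sum_comm]
  rfl

theorem sum_pull {a b c e : ℕ} {ι : Type*} [Fintype ι]
    (C : Matrix (Fin a) (Fin b) ℂ) (D : Matrix (Fin c) (Fin e) ℂ)
    (f : ι → Matrix (Fin b) (Fin c) ℂ) :
    ∑ x, C * f x * D = C * (∑ x, f x) * D := by
  simp only [Matrix.mul_sum, Matrix.sum_mul]

theorem mps_sumW (N : ℕ) [NeZero d] (hΛ0 : Λ 0 = 1) (hcano : IsCanonicalMPS N χ Γ Λ) :
    ∀ i, i ≤ N → ∑ τ : Fin i → Fin d,
      (mpsW χ Γ Λ i (fun k => if h : k < i then τ ⟨k, h⟩ else 0))ᴴ *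
        mpsW χ Γ Λ i (fun k => if h : k < i then τ ⟨k, h⟩ else 0) = (Λ i)ᴴ * Λ i
  | 0, _ => by
    rw [Fintype.sum_unique]
    simp [mpsW]
  | (i + 1), hle => by
    rw [sum_snoc]
    have key : ∀ (τ : Fin i → Fin d) (s : Fin d),
        mpsW χ Γ Λ (i + 1)
            (fun k => if h : k < i + 1 then (Fin.snoc τ s : Fin (i + 1) → Fin d) ⟨k, h⟩ else 0)
          = mpsW χ Γ Λ i (fun k => if h : k < i then τ ⟨k, h⟩ else 0) *
              (Γ i s * Λ (i + 1)) := by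
      intro τ s
      set f : ℕ → Fin d :=
        (fun k => if h : k < i + 1 then (Fin.snoc τ s : Fin (i + 1) → Fin d) ⟨k, h⟩ else 0)
        with hf
      have hs : f i = s := by
        simp only [hf, dif_pos (Nat.lt_succ_self i)]
        simp [Fin.snoc]
      have hWf : mpsW χ Γ Λ i f =
          mpsW χ Γ Λ i (fun k => if h : k < i then τ ⟨k, h⟩ else 0) := by
        apply mpsW_congr
        intro k hk
        simp only [hf, dif_pos (Nat.lt_succ_of_lt hk), dif_pos hk]
        simp [Fin.snoc, hk]
      simp only [mpsW, hs, hWf, Matrix.mul_assoc]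
    simp only [key]
    have step1 : ∀ (τ : Fin i → Fin d) (s : Fin d),
        (mpsW χ Γ Λ i (fun k => if h : k < i then τ ⟨k, h⟩ else 0) * (Γ i s * Λ (i + 1)))ᴴ *
            (mpsW χ Γ Λ i (fun k => if h : k < i then τ ⟨k, h⟩ else 0) * (Γ i s * Λ (i + 1)))
          = (Γ i s * Λ (i + 1))ᴴ *
              ((mpsW χ Γ Λ i (fun k => if h : k < i then τ ⟨k, h⟩ else 0))ᴴ *
                mpsW χ Γ Λ i (fun k => if h : k < i then τ ⟨k, h⟩ else 0)) *
              (Γ i s * Λ (i + 1)) := by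
      intro τ s
      simp only [conjTranspose_mul, Matrix.mul_assoc]
    simp only [step1]
    rw [Finset.sum_comm]
    have step2 : ∀ s : Fin d,
        ∑ τ : Fin i → Fin d,
            (Γ i s * Λ (i + 1))ᴴ *
              ((mpsW χ Γ Λ i (fun k => if h : k < i then τ ⟨k, h⟩ else 0))ᴴ *
                mpsW χ Γ Λ i (fun k => if h : k < i then τ ⟨k, h⟩ else 0)) *
              (Γ i s * Λ (i + 1))
          = (Γ i s * Λ (i + 1))ᴴ * ((Λ i)ᴴ * Λ i) * (Γ i s * Λ (i + 1)) := by
      intro s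
      rw [sum_pull, mps_sumW N hΛ0 hcano i (by omega)]
    simp only [step2]
    have step3 : ∀ s : Fin d,
        (Γ i s * Λ (i + 1))ᴴ * ((Λ i)ᴴ * Λ i) * (Γ i s * Λ (i + 1))
          = (Λ (i + 1))ᴴ * ((Λ i * Γ i s)ᴴ * (Λ i * Γ i s)) * Λ (i + 1) := by
      intro s
      simp only [conjTranspose_mul, Matrix.mul_assoc]
    simp only [step3]
    rw [sum_pull, (hcano i (by omega)).1]
    simp

theorem mps_sumT (N : ℕ) [NeZero d] (hcano : IsCanonicalMPS N χ Γ Λ) (i : ℕ) :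
    ∀ n, i + n ≤ N → ∑ τ : Fin n → Fin d,
      mpsT χ Γ Λ i n (fun k => if h : k - i < n then τ ⟨k - i, h⟩ else 0) *
        (mpsT χ Γ Λ i n (fun k => if h : k - i < n then τ ⟨k - i, h⟩ else 0))ᴴ = 1
  | 0, _ => by
    rw [Fintype.sum_unique]
    simp [mpsT]
  | (n + 1), hle => by
    rw [sum_snoc]
    have key : ∀ (τ : Fin n → Fin d) (s : Fin d),
        mpsT χ Γ Λ i (n + 1)
            (fun k => if h : k - i < n + 1 then (Fin.snoc τ s : Fin (n + 1) → Fin d) ⟨k - i, h⟩ else 0)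
          = mpsT χ Γ Λ i n (fun k => if h : k - i < n then τ ⟨k - i, h⟩ else 0) *
              (Γ (i + n) s * Λ (i + n + 1)) := by
      intro τ s
      set f : ℕ → Fin d :=
        (fun k => if h : k - i < n + 1 then (Fin.snoc τ s : Fin (n + 1) → Fin d) ⟨k - i, h⟩ else 0)
        with hf
      have h1 : i + n - i < n + 1 := by omega
      have hs : f (i + n) = s := by
        simp only [hf, dif_pos h1]
        have hno : ¬ (i + n - i < n) := by omega
        simp [Fin.snoc, hno]
      have hTf : mpsT χ Γ Λ i n f =
          mpsT χ Γ Λ i n (fun k => if h : k - i < n then τ ⟨k - i, h⟩ else 0) := by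
        apply mpsT_congr
        intro k hik hkn
        have hk : k - i < n := by omega
        simp only [hf, dif_pos (show k - i < n + 1 by omega), dif_pos hk]
        simp [Fin.snoc, hk]
      simp only [mpsT, hs, hTf, Matrix.mul_assoc]
    simp only [key]
    have step1 : ∀ (τ : Fin n → Fin d) (s : Fin d),
        (mpsT χ Γ Λ i n (fun k => if h : k - i < n then τ ⟨k - i, h⟩ else 0) *
              (Γ (i + n) s * Λ (i + n + 1))) *
            (mpsT χ Γ Λ i n (fun k => if h : k - i < n then τ ⟨k - i, h⟩ else 0) *
              (Γ (i + n) s * Λ (i + n + 1)))ᴴ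
          = mpsT χ Γ Λ i n (fun k => if h : k - i < n then τ ⟨k - i, h⟩ else 0) *
              ((Γ (i + n) s * Λ (i + n + 1)) * (Γ (i + n) s * Λ (i + n + 1))ᴴ) *
              (mpsT χ Γ Λ i n (fun k => if h : k - i < n then τ ⟨k - i, h⟩ else 0))ᴴ := by
      intro τ s
      simp only [conjTranspose_mul, Matrix.mul_assoc]
    simp only [step1]
    have step2 : ∀ τ : Fin n → Fin d,
        ∑ s : Fin d,
            mpsT χ Γ Λ i n (fun k => if h : k - i < n then τ ⟨k - i, h⟩ else 0) *
              ((Γ (i + n) s * Λ (i + n + 1)) * (Γ (i + n) s * Λ (i + n + 1))ᴴ) *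
              (mpsT χ Γ Λ i n (fun k => if h : k - i < n then τ ⟨k - i, h⟩ else 0))ᴴ
          = mpsT χ Γ Λ i n (fun k => if h : k - i < n then τ ⟨k - i, h⟩ else 0) *
              (mpsT χ Γ Λ i n (fun k => if h : k - i < n then τ ⟨k - i, h⟩ else 0))ᴴ := by
      intro τ
      rw [sum_pull, (hcano (i + n) (by omega)).2]
      simp
    simp only [step2]
    exact mps_sumT N hcano i n (by omega)

theorem sum_split {M : Type*} [AddCommMonoid M] (i m : ℕ) (f : (Fin (i + m) → Fin d) → M) :
    ∑ σ : Fin (i + m) → Fin d, f σ =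
      ∑ τ1 : Fin i → Fin d, ∑ τ2 : Fin m → Fin d,
        f (fun k => if h : (k : ℕ) < i then τ1 ⟨k, h⟩
            else τ2 ⟨(k : ℕ) - i, by have := k.isLt; omega⟩) := by
  have hg : Function.Bijective
      (fun p : (Fin i → Fin d) × (Fin m → Fin d) =>
        (fun k => if h : (k : ℕ) < i then p.1 ⟨k, h⟩
            else p.2 ⟨(k : ℕ) - i, by have := k.isLt; omega⟩ : Fin (i + m) → Fin d)) := by
    apply Function.bijective_iff_has_inverse.mpr
    refine ⟨fun σ => (fun a => σ ⟨a, by have := a.isLt; omega⟩,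
      fun b => σ ⟨i + b, by have := b.isLt; omega⟩), ?_, ?_⟩
    · intro p
      refine Prod.ext ?_ ?_ <;> funext x
      · simp [x.isLt]
      · have h1 : ¬ (i + (x : ℕ) < i) := by omega
        simp only [Fin.val_mk, dif_neg h1]
        congr 1
        ext
        simp
    · intro σ
      funext k
      by_cases h : (k : ℕ) < i
      · simp [h]
      · simp only [dif_neg h]
        congr 1
        ext
        simp
        omega
  rw [← Fintype.sum_bijective _ hg _ f (fun p => rfl), Fintype.sum_prod_type]

end Aux

/-- Schmidt spectrum of a canonical MPS: if the MPS is in canonical form,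
then at every interior bond `i ∈ {1, …, N−1}` the squared ℓ²-norm of the wavefunction equals
the sum of the squared diagonal entries of `Λ^{[i]}`; in particular the wavefunction is
normalized if and only if `∑_α (Λ^{[i]}_{αα})² = 1` at any (equivalently, every) interior
bond. -/
theorem canonical_mps_norm_eq_sum_sq_singular_values
    (N d : ℕ) [NeZero d] (hN : 1 ≤ N)
    (χ : ℕ → ℕ) (hχ0 : χ 0 = 1) (hχN : χ N = 1) (hχpos : ∀ i, 1 ≤ χ i)
    (Γ : (i : ℕ) → Fin d → Matrix (Fin (χ i)) (Fin (χ (i + 1))) ℂ)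
    (Λ : (i : ℕ) → Matrix (Fin (χ i)) (Fin (χ i)) ℂ)
    (hΛ0 : Λ 0 = 1) (hΛN : Λ N = 1)
    (hΛdiag : ∀ i ≤ N, (Λ i).IsDiag)
    (hΛreal : ∀ i ≤ N, ∀ α, (Λ i α α).im = 0 ∧ 0 ≤ (Λ i α α).re)
    (hΛdesc : ∀ i ≤ N, ∀ α β : Fin (χ i), α ≤ β → (Λ i β β).re ≤ (Λ i α α).re)
    (hcano : IsCanonicalMPS N χ Γ Λ) :
    (∀ i, 1 ≤ i → i < N →
        ∑ σ : Fin N → Fin d, ‖mpsPsi N χ Γ Λ σ‖ ^ 2 =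
          ∑ α : Fin (χ i), ((Λ i α α).re) ^ 2) ∧
      (∀ i, 1 ≤ i → i < N →
        ((∑ σ : Fin N → Fin d, ‖mpsPsi N χ Γ Λ σ‖ ^ 2 = 1) ↔
          ∑ α : Fin (χ i), ((Λ i α α).re) ^ 2 = 1)) := by
  have key : ∀ i, 1 ≤ i → i < N →
      ∑ σ : Fin N → Fin d, ‖mpsPsi N χ Γ Λ σ‖ ^ 2 =
        ∑ α : Fin (χ i), ((Λ i α α).re) ^ 2 := by
    intro i hi1 hiN
    obtain ⟨m, rfl⟩ : ∃ m, N = i + m := ⟨N - i, by omega⟩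
    haveI u0 : Unique (Fin (χ 0)) := by rw [hχ0]; infer_instance
    haveI uN : Unique (Fin (χ (i + m))) := by rw [hχN]; infer_instance
    set ext : (Fin (i + m) → Fin d) → (ℕ → Fin d) :=
      fun σ k => if h : k < i + m then σ ⟨k, h⟩ else 0 with hext
    have hψ : ∀ σ, mpsPsi (i + m) χ Γ Λ σ =
        mpsW χ Γ Λ (i + m) (ext σ) default default := by
      intro σ
      simp only [mpsPsi]
      rw [Fintype.sum_unique, Fintype.sum_unique]
    have hz : ∀ z : ℂ, ‖z‖ ^ 2 = ((starRingEnd ℂ) z * z).re := by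
      intro z
      rw [Complex.sq_norm]
      simp [Complex.normSq_apply, Complex.mul_re]
    have hentry : ∀ σ, ((starRingEnd ℂ) (mpsW χ Γ Λ (i + m) (ext σ) default default)) *
        mpsW χ Γ Λ (i + m) (ext σ) default default =
        ((mpsW χ Γ Λ (i + m) (ext σ))ᴴ * mpsW χ Γ Λ (i + m) (ext σ)) default default := by
      intro σ
      rw [Matrix.mul_apply, Fintype.sum_unique]
      simp [Matrix.conjTranspose_apply]
    calc ∑ σ : Fin (i + m) → Fin d, ‖mpsPsi (i + m) χ Γ Λ σ‖ ^ 2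
        = ∑ σ : Fin (i + m) → Fin d,
            (((mpsW χ Γ Λ (i + m) (ext σ))ᴴ * mpsW χ Γ Λ (i + m) (ext σ)) default default).re := by
          refine Finset.sum_congr rfl fun σ _ => ?_
          rw [hψ σ, hz, hentry σ]
      _ = ((∑ σ : Fin (i + m) → Fin d,
            (mpsW χ Γ Λ (i + m) (ext σ))ᴴ * mpsW χ Γ Λ (i + m) (ext σ)) default default).re := by
          rw [Matrix.sum_apply, Complex.re_sum]
      _ = ∑ α : Fin (χ i), ((Λ i α α).re) ^ 2 := by
          have hsum : (∑ σ : Fin (i + m) → Fin d,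
              (mpsW χ Γ Λ (i + m) (ext σ))ᴴ * mpsW χ Γ Λ (i + m) (ext σ)) default default
              = Matrix.trace ((Λ i)ᴴ * Λ i) := by
            rw [sum_split i m]
            have hterm : ∀ (τ1 : Fin i → Fin d) (τ2 : Fin m → Fin d),
                (mpsW χ Γ Λ (i + m) (ext (fun k => if h : (k : ℕ) < i then τ1 ⟨k, h⟩
                    else τ2 ⟨(k : ℕ) - i, by have := k.isLt; omega⟩)))ᴴ *
                  mpsW χ Γ Λ (i + m) (ext (fun k => if h : (k : ℕ) < i then τ1 ⟨k, h⟩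
                    else τ2 ⟨(k : ℕ) - i, by have := k.isLt; omega⟩))
                = (mpsT χ Γ Λ i m (fun k => if h : k - i < m then τ2 ⟨k - i, h⟩ else 0))ᴴ *
                    ((mpsW χ Γ Λ i (fun k => if h : k < i then τ1 ⟨k, h⟩ else 0))ᴴ *
                      mpsW χ Γ Λ i (fun k => if h : k < i then τ1 ⟨k, h⟩ else 0)) *
                    mpsT χ Γ Λ i m (fun k => if h : k - i < m then τ2 ⟨k - i, h⟩ else 0) := by
              intro τ1 τ2
              have hW : mpsW χ Γ Λ (i + m) (ext (fun k => if h : (k : ℕ) < i then τ1 ⟨k, h⟩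
                  else τ2 ⟨(k : ℕ) - i, by have := k.isLt; omega⟩))
                  = mpsW χ Γ Λ i (fun k => if h : k < i then τ1 ⟨k, h⟩ else 0) *
                    mpsT χ Γ Λ i m (fun k => if h : k - i < m then τ2 ⟨k - i, h⟩ else 0) := by
                rw [mpsW_split]
                congr 1
                · apply mpsW_congr
                  intro k hk
                  have hk2 : k < i + m := by omega
                  simp only [hext, dif_pos hk2, dif_pos hk]
                · apply mpsT_congr
                  intro k h1 h2
                  have hk2 : k < i + m := h2
                  have hk3 : ¬ ((⟨k, hk2⟩ : Fin (i + m)) : ℕ) < i := by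
                    show ¬ k < i
                    omega
                  have hk4 : k - i < m := by omega
                  simp only [hext, dif_pos hk2, dif_neg hk3, dif_pos hk4]
              rw [hW]
              simp only [conjTranspose_mul, Matrix.mul_assoc]
            simp only [hterm]
            have hWsum := mps_sumW χ Γ Λ (i + m) hΛ0 hcano i (by omega)
            have hinner : ∀ τ2 : Fin m → Fin d,
                ∑ τ1 : Fin i → Fin d,
                  (mpsT χ Γ Λ i m (fun k => if h : k - i < m then τ2 ⟨k - i, h⟩ else 0))ᴴ *
                    ((mpsW χ Γ Λ i (fun k => if h : k < i then τ1 ⟨k, h⟩ else 0))ᴴ *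
                      mpsW χ Γ Λ i (fun k => if h : k < i then τ1 ⟨k, h⟩ else 0)) *
                    mpsT χ Γ Λ i m (fun k => if h : k - i < m then τ2 ⟨k - i, h⟩ else 0)
                = (mpsT χ Γ Λ i m (fun k => if h : k - i < m then τ2 ⟨k - i, h⟩ else 0))ᴴ *
                    ((Λ i)ᴴ * Λ i) *
                    mpsT χ Γ Λ i m (fun k => if h : k - i < m then τ2 ⟨k - i, h⟩ else 0) := by
              intro τ2
              rw [sum_pull, hWsum]
            rw [Finset.sum_comm]
            simp only [hinner]
            have htr : ∀ X : Matrix (Fin (χ (i + m))) (Fin (χ (i + m))) ℂ,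
                X default default = Matrix.trace X := by
              intro X
              rw [Matrix.trace, Fintype.sum_unique]
              rfl
            refine (htr _).trans ?_
            rw [Matrix.trace_sum]
            have hcyc : ∀ τ2 : Fin m → Fin d,
                Matrix.trace ((mpsT χ Γ Λ i m (fun k => if h : k - i < m then τ2 ⟨k - i, h⟩ else 0))ᴴ *
                    ((Λ i)ᴴ * Λ i) *
                    mpsT χ Γ Λ i m (fun k => if h : k - i < m then τ2 ⟨k - i, h⟩ else 0))
                = Matrix.trace (((Λ i)ᴴ * Λ i) *
                    (mpsT χ Γ Λ i m (fun k => if h : k - i < m then τ2 ⟨k - i, h⟩ else 0) *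
                      (mpsT χ Γ Λ i m (fun k => if h : k - i < m then τ2 ⟨k - i, h⟩ else 0))ᴴ)) := by
              intro τ2
              rw [Matrix.trace_mul_cycle, Matrix.trace_mul_comm, Matrix.mul_assoc]
            simp only [hcyc]
            rw [← Matrix.trace_sum]
            have hone : ∑ τ2 : Fin m → Fin d, ((Λ i)ᴴ * Λ i) *
                (mpsT χ Γ Λ i m (fun k => if h : k - i < m then τ2 ⟨k - i, h⟩ else 0) *
                  (mpsT χ Γ Λ i m (fun k => if h : k - i < m then τ2 ⟨k - i, h⟩ else 0))ᴴ)
                = ((Λ i)ᴴ * Λ i) * (1 : Matrix (Fin (χ i)) (Fin (χ i)) ℂ) := by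
              rw [← Matrix.mul_sum, mps_sumT χ Γ Λ (i + m) hcano i m (by omega)]
            rw [hone, Matrix.mul_one]
          rw [hsum, Matrix.trace]
          have hdiag : ∀ α : Fin (χ i), Matrix.diag ((Λ i)ᴴ * Λ i) α
              = (starRingEnd ℂ) (Λ i α α) * Λ i α α := by
            intro α
            rw [Matrix.diag_apply, Matrix.mul_apply,
              Fintype.sum_eq_single α (fun β hβ => by
                have h0 : Λ i β α = 0 := hΛdiag i (by omega) hβ
                simp [h0])]
            simp [Matrix.conjTranspose_apply]
          simp only [hdiag]
          rw [Complex.re_sum]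
          refine Finset.sum_congr rfl fun α _ => ?_
          have him : (Λ i α α).im = 0 := (hΛreal i (by omega) α).1
          simp [Complex.mul_re, him, sq]
  exact ⟨key, fun i h1 h2 => by rw [key i h1 h2]⟩
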